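/- Let x be an alcove, m ∈ ℤ, and Fix(x,m) = {i : x^{(1)}_i = m and P(x)(i) = i}. Then Fix(rot(x), m) = c^{-1}(Fix(x,m)), where c is the n-cycle (1 2 ... n). -/
import Mathlib


open Finset

/-- Standard basis vector `e_j` in `ℤⁿ`. -/
def ev (n : ℕ) (j : Fin n) : Fin n → ℤ := fun k => if k = j then 1 else 0

/-- The coweight `ϖ_t = e_1 + ⋯ + e_t` (t ones followed by zeros). -/
def varpi (n t : ℕ) : Fin n → ℤ := fun j => if (j : ℕ) < t then 1 else 0

/-- Dominance order `μ ⪯ λ`: equal total sums, partial sums of `μ` bounded by those of `λ`. -/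
def DomLE {n : ℕ} (μ lam : Fin n → ℤ) : Prop :=
  (∑ i, μ i = ∑ i, lam i) ∧
  ∀ k : Fin n, ∑ i ∈ Finset.Iic k, μ i ≤ ∑ i ∈ Finset.Iic k, lam i

/-- A coweight is dominant iff its coordinates are weakly decreasing. -/
def IsDominant {n : ℕ} (v : Fin n → ℤ) : Prop := ∀ i j : Fin n, i ≤ j → v j ≤ v i

/-- The weakly decreasing rearrangement `dom(v)` of `v`. -/
noncomputable def domOf {n : ℕ} (v : Fin n → ℤ) : Fin n → ℤ :=
  v ∘ Tuple.sort (fun i => -v i)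

/-- `succA x i` is `x^{(i+1)}`, with the convention `x^{(n+1)} = x^{(1)} + (1,…,1)`. -/
def succA {n : ℕ} (x : Fin n → Fin n → ℤ) (i : Fin n) : Fin n → ℤ :=
  if h : (i : ℕ) + 1 < n then x ⟨(i : ℕ) + 1, h⟩ else fun j => x ⟨0, i.pos⟩ j + 1

/-- A tuple `(x^{(1)},…,x^{(n)})` is an alcove. -/
def IsAlcove {n : ℕ} (x : Fin n → Fin n → ℤ) : Prop :=
  (∀ i : Fin n, ∀ j, x i j ≤ succA x i j) ∧
  (∀ i : Fin n, (i : ℕ) + 1 < n → ∑ j, succA x i j = (∑ j, x i j) + 1)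

/-- `P` is the permutation `P(x)` of the alcove `x`: `x^{(i+1)} = x^{(i)} + e_{P(x)(i)}`. -/
def IsPermOf {n : ℕ} (x : Fin n → Fin n → ℤ) (P : Equiv.Perm (Fin n)) : Prop :=
  ∀ i : Fin n, ∀ j, succA x i j = x i j + ev n (P i) j

/-- A permutation acts on `ℤⁿ` by permuting coordinates: `(σv)_{σ(i)} = v_i`. -/
def permAct {n : ℕ} (σ : Equiv.Perm (Fin n)) (v : Fin n → ℤ) : Fin n → ℤ :=
  fun j => v (σ.symm j)

/-- The `n`-cycle `c = (1 2 ⋯ n)`. -/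
def cyc (n : ℕ) [NeZero n] : Equiv.Perm (Fin n) := Equiv.addRight 1

/-- Rotation of alcoves. -/
def rotA {n : ℕ} [NeZero n] (x : Fin n → Fin n → ℤ) : Fin n → Fin n → ℤ := fun i =>
  if h : (i : ℕ) + 1 < n then
    permAct (cyc n)⁻¹ (fun j => x ⟨(i : ℕ) + 1, h⟩ j - varpi n 1 j)
  else
    fun j => permAct (cyc n)⁻¹ (x 0) j + varpi n (n - 1) j

/-- An alcove is `λ`-permissible if `dom(x^{(i)} - ϖ_{i-1}) ⪯ λ` for all `i`. -/
noncomputable def Permissible {n : ℕ} (lam : Fin n → ℤ) (x : Fin n → Fin n → ℤ) : Prop :=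
  ∀ i : Fin n, DomLE (domOf (fun j => x i j - varpi n (i : ℕ) j)) lam

/-- The Kottwitz–Rapoport relation `i ⊴_x j` (six-case rule). -/
def TriLE {n : ℕ} (x : Fin n → Fin n → ℤ) (P : Equiv.Perm (Fin n)) (i j : Fin n) : Prop :=
  (x ⟨0, i.pos⟩ j < x ⟨0, i.pos⟩ i) ∨
  (x ⟨0, i.pos⟩ i = x ⟨0, i.pos⟩ j ∧
    ((P.symm i < i ∧ P.symm j < j ∧ j ≤ i) ∨
     (P.symm i < i ∧ j ≤ P.symm j) ∨
     (P.symm i = i ∧ P.symm j = j ∧ i = j) ∨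
     (P.symm i = i ∧ j < P.symm j) ∨
     (i < P.symm i ∧ j < P.symm j ∧ j ≤ i)))
lemma ev_eq_of_forall {n : ℕ} {a b : Fin n} (h : ∀ j, ev n a j = ev n b j) : a = b := by
  by_contra hne
  have h1 := h a
  simp [ev, hne] at h1

lemma zero_mk {n : ℕ} [NeZero n] (h : 0 < n) : (0 : Fin n) = ⟨0, h⟩ := by
  apply Fin.ext; simp

lemma cyc_eq_of_lt {n : ℕ} [NeZero n] (i : Fin n) (h : (i : ℕ) + 1 < n) :
    cyc n i = ⟨(i : ℕ) + 1, h⟩ := by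
  apply Fin.ext
  show ((i + 1 : Fin n) : ℕ) = (i : ℕ) + 1
  rw [Fin.add_def]
  show ((i : ℕ) + (1 : Fin n).val) % n = (i : ℕ) + 1
  rw [Fin.val_one' n, Nat.mod_eq_of_lt (by omega : 1 < n), Nat.mod_eq_of_lt h]

lemma cyc_eq_zero {n : ℕ} [NeZero n] (i : Fin n) (h : ¬ ((i : ℕ) + 1 < n)) :
    cyc n i = ⟨0, i.pos⟩ := by
  apply Fin.ext
  show ((i + 1 : Fin n) : ℕ) = 0
  rw [Fin.add_def]
  show ((i : ℕ) + (1 : Fin n).val) % n = 0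
  have hi : (i : ℕ) + 1 = n := by have := i.isLt; omega
  rw [Fin.val_one' n]
  rcases Nat.lt_or_ge 1 n with h1 | h1
  · rw [Nat.mod_eq_of_lt h1, hi, Nat.mod_self]
  · have hn1 : n = 1 := by have := Nat.pos_of_ne_zero (NeZero.ne n); omega
    subst hn1
    simp

lemma permAct_inv_cyc {n : ℕ} [NeZero n] (v : Fin n → ℤ) (j : Fin n) :
    permAct (cyc n)⁻¹ v j = v (cyc n j) := by
  simp [permAct, Equiv.Perm.inv_def]

lemma varpi_helper {n : ℕ} [NeZero n] (j : Fin n) :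
    varpi n (n - 1) j + varpi n 1 (cyc n j) = 1 := by
  unfold varpi
  rcases lt_or_ge (j : ℕ) (n - 1) with h | h
  · have h2 : ((cyc n j : Fin n) : ℕ) = (j : ℕ) + 1 := by
      rw [cyc_eq_of_lt j (by omega)]
    rw [h2]
    simp [h]
  · have hj : (j : ℕ) = n - 1 := by have := j.isLt; omega
    have h2 : ((cyc n j : Fin n) : ℕ) = 0 := by
      rw [cyc_eq_zero j (by have := j.isLt; omega)]
    rw [h2]
    simp [hj]

lemma diff_eq {n : ℕ} [NeZero n] (x : Fin n → Fin n → ℤ) (P : Equiv.Perm (Fin n))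
    (hP : IsPermOf x P) (i j : Fin n) :
    succA (rotA x) i j - rotA x i j = ev n (P (cyc n i)) (cyc n j) := by
  have hvp := varpi_helper j
  by_cases hi : (i : ℕ) + 1 < n
  · have hci : cyc n i = ⟨(i : ℕ) + 1, hi⟩ := cyc_eq_of_lt i hi
    have hsucc : succA (rotA x) i j = rotA x ⟨(i : ℕ) + 1, hi⟩ j := by
      simp [succA, hi]
    have hroti : rotA x i j = x ⟨(i : ℕ) + 1, hi⟩ (cyc n j) - varpi n 1 (cyc n j) := by
      simp only [rotA, dif_pos hi, permAct_inv_cyc]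
    have hPj := hP ⟨(i : ℕ) + 1, hi⟩ (cyc n j)
    by_cases hi2 : (i : ℕ) + 1 + 1 < n
    · rw [hsucc, hroti, hci]
      simp only [rotA, dif_pos hi2, permAct_inv_cyc]
      simp only [succA, dif_pos hi2] at hPj
      rw [hPj]; ring
    · -- i+1 = n-1
      rw [hsucc, hroti, hci]
      simp only [rotA, dif_neg hi2]
      rw [permAct_inv_cyc, zero_mk i.pos]
      simp only [succA, dif_neg hi2] at hPj
      have hPj' : x ⟨0, i.pos⟩ (cyc n j) + 1
          = x ⟨(i : ℕ) + 1, hi⟩ (cyc n j) + ev n (P ⟨(i : ℕ) + 1, hi⟩) (cyc n j) := hPj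
      linarith [hPj', hvp]
  · -- i = n - 1, cyc n i = 0
    have hci : cyc n i = ⟨0, i.pos⟩ := cyc_eq_zero i hi
    have hsucc : succA (rotA x) i j = rotA x ⟨0, i.pos⟩ j + 1 := by
      simp [succA, hi]
    have hroti : rotA x i j = x 0 (cyc n j) + varpi n (n - 1) j := by
      simp only [rotA, dif_neg hi, permAct_inv_cyc]
    by_cases h1 : (1 : ℕ) < n
    · have h01 : ((⟨0, i.pos⟩ : Fin n) : ℕ) + 1 < n := by simpa using h1
      have hPj := hP ⟨0, i.pos⟩ (cyc n j)
      simp only [succA, dif_pos h01] at hPj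
      rw [hsucc, hroti, hci]
      simp only [rotA, dif_pos h01]
      rw [permAct_inv_cyc, hPj, zero_mk i.pos]
      linarith [hvp]
    · -- n = 1
      have hn : n = 1 := by have := Nat.pos_of_ne_zero (NeZero.ne n); omega
      subst hn
      have hij : i = ⟨0, i.pos⟩ := Subsingleton.elim _ _
      have hev : ev 1 (P (cyc 1 i)) (cyc 1 j) = 1 := by
        simp [ev, Subsingleton.elim (cyc 1 j) (P (cyc 1 i))]
      rw [hsucc, ← hij, hev]
      ring

theorem fix_rot (n : ℕ) [NeZero n] (x : Fin n → Fin n → ℤ) (hx : IsAlcove x)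
    (P P' : Equiv.Perm (Fin n)) (hP : IsPermOf x P) (hP' : IsPermOf (rotA x) P') (m : ℤ) :
    ∀ i : Fin n,
      (rotA x 0 i = m ∧ P' i = i) ↔ (x 0 (cyc n i) = m ∧ P (cyc n i) = cyc n i) := by
  intro i
  have hPeq : ∀ k, P' k = (cyc n).symm (P (cyc n k)) := by
    intro k
    apply ev_eq_of_forall (n := n)
    intro j
    have h1 := hP' k j
    have h2 := diff_eq x P hP k j
    have h3 : ev n (P' k) j = ev n (P (cyc n k)) (cyc n j) := by omega
    rw [h3]
    simp only [ev]
    congr 1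
    simp [eq_comm, Equiv.eq_symm_apply]
  have hperm : P' i = i ↔ P (cyc n i) = cyc n i := by
    rw [hPeq i]
    constructor
    · intro h
      have := congrArg (cyc n) h
      simpa using this
    · intro h
      rw [h]; simp
  have hval : P (cyc n i) = cyc n i → rotA x 0 i = x 0 (cyc n i) := by
    intro hfix
    by_cases h1 : (1 : ℕ) < n
    · have h01 : ((0 : Fin n) : ℕ) + 1 < n := by simpa using h1
      have hPj := hP 0 (cyc n i)
      simp only [succA, dif_pos h01] at hPj
      have : rotA x 0 i = x ⟨((0 : Fin n) : ℕ) + 1, h01⟩ (cyc n i) - varpi n 1 (cyc n i) := by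
        simp only [rotA, dif_pos h01, permAct_inv_cyc]
      rw [this, hPj]
      have hkey : ev n (P 0) (cyc n i) = varpi n 1 (cyc n i) := by
        by_cases hz : cyc n i = 0
        · have : P 0 = 0 := by rw [← hz, hfix, hz]
          simp [ev, varpi, hz, this]
        · have hne : cyc n i ≠ P 0 := by
            intro hcontra
            exact hz (P.injective (by rw [← hcontra, hfix]))
          have hvz : ¬ ((cyc n i : Fin n) : ℕ) < 1 := by
            simp only [Nat.lt_one_iff]
            intro hcontra
            exact hz (Fin.ext hcontra)
          simp [ev, varpi, hne, hvz]
      rw [hkey]; ring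
    · have hn : n = 1 := by have := Nat.pos_of_ne_zero (NeZero.ne n); omega
      subst hn
      have : rotA x 0 i = x 0 (cyc 1 i) + varpi 1 (1 - 1) i := by
        simp only [rotA]
        rw [dif_neg (by simp), permAct_inv_cyc]
      rw [this]
      simp [varpi]
  constructor
  · rintro ⟨h1, h2⟩
    have hf := hperm.1 h2
    exact ⟨by rw [← hval hf]; exact h1, hf⟩
  · rintro ⟨h1, h2⟩
    exact ⟨by rw [hval h2]; exact h1, hperm.2 h2⟩
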